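/- Let I ⊆ ℝ be an interval and x, y : I → ℝ differentiable functions satisfying x′(t) = −2·x(t)·(3x(t) − y(t))·(x(t) + y(t)) and y′(t) = 2·y(t)·(x(t) − 3y(t))·(x(t) + y(t)), and suppose x(t)·y(t) ≠ 0 for all t ∈ I. Then the function H(t) := (y(t) − x(t))² / ( x(t)³ · y(t)³ ) is constant on I; i.e. H is a first integral of the system. -/

import Mathlib

/-- For the planar restriction of the bracket flow
`x′ = −2x(3x−y)(x+y)`, `y′ = 2y(x−3y)(x+y)` with `x·y ≠ 0` on an interval `I`,
the function `H = (y − x)²/(x³y³)` is a first integral: it is constant on `I`. -/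
theorem first_integral_planar_bracket_flow (I : Set ℝ) (hI : I.OrdConnected)
    (x y : ℝ → ℝ)
    (hx : ∀ t ∈ I, HasDerivAt x (-2 * x t * (3 * x t - y t) * (x t + y t)) t)
    (hy : ∀ t ∈ I, HasDerivAt y (2 * y t * (x t - 3 * y t) * (x t + y t)) t)
    (hne : ∀ t ∈ I, x t * y t ≠ 0) :
    ∀ s ∈ I, ∀ t ∈ I,
      (y s - x s)^2 / ((x s)^3 * (y s)^3) = (y t - x t)^2 / ((x t)^3 * (y t)^3) := by
  intro s hs t ht
  set f : ℝ → ℝ := fun u => (y u - x u)^2 / ((x u)^3 * (y u)^3) with hf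
  have hconv : Convex ℝ I := hI.convex
  have key : ∀ u ∈ I, HasDerivWithinAt f 0 I u := by
    intro u hu
    have hxu : x u ≠ 0 := fun h => hne u hu (by rw [h]; ring)
    have hyu : y u ≠ 0 := fun h => hne u hu (by rw [h]; ring)
    have hx' := hx u hu
    have hy' := hy u hu
    have hn : HasDerivAt (fun v => (y v - x v)^2)
        (2 * (y u - x u) ^ 1 * (2 * y u * (x u - 3 * y u) * (x u + y u) -
          -2 * x u * (3 * x u - y u) * (x u + y u))) u := by
      simpa using (hy'.fun_sub hx').fun_pow 2
    have hd : HasDerivAt (fun v => (x v)^3 * (y v)^3)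
        ((3 * x u ^ 2 * (-2 * x u * (3 * x u - y u) * (x u + y u))) * (y u)^3 +
          (x u)^3 * (3 * y u ^ 2 * (2 * y u * (x u - 3 * y u) * (x u + y u)))) u := by
      simpa using (hx'.fun_pow 3).fun_mul (hy'.fun_pow 3)
    have hd0 : (x u)^3 * (y u)^3 ≠ 0 := by positivity
    have h := hn.div hd hd0
    have h0 : (2 * (y u - x u) ^ 1 * (2 * y u * (x u - 3 * y u) * (x u + y u) -
          -2 * x u * (3 * x u - y u) * (x u + y u)) * ((x u)^3 * (y u)^3) -
        (y u - x u)^2 * ((3 * x u ^ 2 * (-2 * x u * (3 * x u - y u) * (x u + y u))) * (y u)^3 +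
          (x u)^3 * (3 * y u ^ 2 * (2 * y u * (x u - 3 * y u) * (x u + y u))))) /
        ((x u)^3 * (y u)^3)^2 = 0 := by
      rw [div_eq_zero_iff]
      left
      ring
    rw [h0] at h
    exact h.hasDerivWithinAt
  have := hconv.norm_image_sub_le_of_norm_hasDerivWithin_le
    (C := 0) (f' := fun _ => (0 : ℝ)) key (fun u hu => by simp) ht hs
  rw [zero_mul, norm_le_zero_iff, sub_eq_zero] at this
  exact this
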